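/- If T_h : Q → Q is a bounded linear idempotent operator (T_h^2 = T_h) on a Hilbert space Q with T_h ≠ 0 and T_h ≠ I, then for every u ∈ Q and every p_h in the range of T_h, ‖u - T_h u‖ ≤ ‖T_h‖ · ‖u - p_h‖. -/

import Mathlib

set_option maxHeartbeats 1000000 in
open RealInnerProductSpace in
/-- Key estimate: for a nonzero continuous idempotent `T` on a real Hilbert space,
`‖x - T x‖ ≤ ‖T‖ * ‖x‖` for every `x`. -/
theorem idem_norm_sub_le {Q : Type*} [NormedAddCommGroup Q]
    [InnerProductSpace ℝ Q] [CompleteSpace Q]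
    (T : Q →L[ℝ] Q) (hidem : T.comp T = T) (h0 : T ≠ 0) (x : Q) :
    ‖x - T x‖ ≤ ‖T‖ * ‖x‖ := by
  have hTT : ∀ y : Q, T (T y) = T y := by
    intro y
    have := congrArg (fun S : Q →L[ℝ] Q => S y) hidem
    simpa using this
  have hT1 : (1 : ℝ) ≤ ‖T‖ := by
    have hpos : (0 : ℝ) < ‖T‖ := norm_pos_iff.mpr h0
    have h2 : ‖T‖ ≤ ‖T‖ * ‖T‖ := by
      calc ‖T‖ = ‖T.comp T‖ := by rw [hidem]
        _ ≤ ‖T‖ * ‖T‖ := ContinuousLinearMap.opNorm_comp_le T T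
    exact (le_mul_iff_one_le_left hpos).mp h2
  -- the kernel of `id - T`, i.e. the range of `T`, as a closed submodule
  set K : Submodule ℝ Q := LinearMap.ker ((ContinuousLinearMap.id ℝ Q - T : Q →L[ℝ] Q) : Q →ₗ[ℝ] Q) with hK
  have hKmem : ∀ y : Q, y ∈ K ↔ T y = y := by
    intro y
    constructor
    · intro hy
      have h2 : y - T y = 0 := by simpa [hK] using hy
      exact (sub_eq_zero.mp h2).symm
    · intro hy
      show (ContinuousLinearMap.id ℝ Q - T) y = 0
      simp [hy]
  have hKclosed : IsClosed (K : Set Q) := ContinuousLinearMap.isClosed_ker (ContinuousLinearMap.id ℝ Q - T)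
  haveI : CompleteSpace K := hKclosed.completeSpace_coe
  set b : Q := x - T x with hb
  have hTb : T b = 0 := by
    simp [hb, map_sub, hTT]
  set m : Q := (K.orthogonalProjectionOnto b : Q) with hm
  have hmK : m ∈ K := SetLike.coe_mem _
  have hTm : T m = m := (hKmem m).mp hmK
  have horth : ∀ w ∈ K, ⟪b - m, w⟫ = 0 := fun w hw =>
    Submodule.starProjection_inner_eq_zero (K := K) b w hw
  have hbm : ⟪b - m, m⟫ = 0 := horth m hmK
  -- Pythagoras : ‖b‖² = ‖b - m‖² + ‖m‖²
  have hpyth : ‖b‖ ^ 2 = ‖b - m‖ ^ 2 + ‖m‖ ^ 2 := by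
    have h := norm_add_sq_real (b - m) m
    rw [hbm] at h
    have hbmm : b - m + m = b := by abel
    rw [hbmm] at h
    linarith
  -- Step 1 : ‖b‖ ≤ ‖T‖ * ‖b - m‖
  have step1 : ‖b‖ ≤ ‖T‖ * ‖b - m‖ := by
    rcases eq_or_ne b 0 with hb0 | hb0
    · simp [hb0]
      positivity
    rcases eq_or_ne m 0 with hm0 | hm0
    · -- here ‖b - m‖ = ‖b‖ and ‖T‖ ≥ 1
      rw [hm0, sub_zero]
      nlinarith [norm_nonneg b]
    · -- test vector z = b - t • m with t = ‖b‖²/‖m‖²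
      have hmpos : (0 : ℝ) < ‖m‖ := norm_pos_iff.mpr hm0
      have hbpos : (0 : ℝ) < ‖b‖ := norm_pos_iff.mpr hb0
      set t : ℝ := ‖b‖ ^ 2 / ‖m‖ ^ 2 with ht
      set z : Q := b - t • m with hz
      have hTz : T z = -(t • m) := by
        simp [hz, map_sub, hTb, hTm]
      have hinner : ⟪b, m⟫ = ‖m‖ ^ 2 := by
        have : ⟪b, m⟫ - ⟪m, m⟫ = 0 := by
          simpa [inner_sub_left] using hbm
        have h2 : ⟪m, m⟫ = (‖m‖ : ℝ) ^ 2 := real_inner_self_eq_norm_sq m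
        linarith
      have hd2 : ‖b - m‖ ^ 2 = ‖b‖ ^ 2 - ‖m‖ ^ 2 := by linarith
      have hzsq : ‖z‖ ^ 2 * ‖m‖ ^ 2 = ‖b‖ ^ 2 * ‖b - m‖ ^ 2 := by
        have hexp : ‖z‖ ^ 2 = ‖b‖ ^ 2 - 2 * t * ⟪b, m⟫ + t ^ 2 * ‖m‖ ^ 2 := by
          rw [hz, norm_sub_sq_real, real_inner_smul_right, norm_smul]
          simp [mul_pow, sq_abs]
          ring
        have hm2 : ‖m‖ ^ 2 ≠ 0 := by positivity
        rw [hexp, hinner, hd2, ht]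
        field_simp
        ring
      have hop : ‖T z‖ ≤ ‖T‖ * ‖z‖ := T.le_opNorm z
      have hTznorm : ‖T z‖ = t * ‖m‖ := by
        rw [hTz, norm_neg, norm_smul]
        have : (0:ℝ) ≤ t := by positivity
        simp [abs_of_nonneg this]
      have hsq : t ^ 2 * ‖m‖ ^ 2 ≤ ‖T‖ ^ 2 * ‖z‖ ^ 2 := by
        have h1 : t * ‖m‖ ≤ ‖T‖ * ‖z‖ := by rw [← hTznorm]; exact hop
        have h2 : (0:ℝ) ≤ t * ‖m‖ := by positivity
        nlinarith [norm_nonneg z, norm_nonneg (T : Q →L[ℝ] Q)]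
      have hkey : ‖b‖ ^ 2 ≤ ‖T‖ ^ 2 * ‖b - m‖ ^ 2 := by
        have hm2 : (0:ℝ) < ‖m‖ ^ 2 := by positivity
        have h3 := mul_le_mul_of_nonneg_right hsq hm2.le
        have ht2 : t ^ 2 * ‖m‖ ^ 2 * ‖m‖ ^ 2 = ‖b‖ ^ 4 := by
          rw [ht]; field_simp
        have h4 : ‖b‖ ^ 4 ≤ ‖T‖ ^ 2 * (‖b‖ ^ 2 * ‖b - m‖ ^ 2) := by
          calc ‖b‖ ^ 4 = t ^ 2 * ‖m‖ ^ 2 * ‖m‖ ^ 2 := ht2.symm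
            _ ≤ ‖T‖ ^ 2 * ‖z‖ ^ 2 * ‖m‖ ^ 2 := h3
            _ = ‖T‖ ^ 2 * (‖b‖ ^ 2 * ‖b - m‖ ^ 2) := by rw [mul_assoc, hzsq]
        nlinarith [hbpos]
      have hfin : ‖b‖ ^ 2 ≤ (‖T‖ * ‖b - m‖) ^ 2 := by
        calc ‖b‖ ^ 2 ≤ ‖T‖ ^ 2 * ‖b - m‖ ^ 2 := hkey
          _ = (‖T‖ * ‖b - m‖) ^ 2 := by ring
      exact le_of_pow_le_pow_left₀ two_ne_zero (by positivity) hfin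
  -- Step 2 : ‖b - m‖ ≤ ‖x‖, using that -T x ∈ K and minimality of the projection
  have step2 : ‖b - m‖ ≤ ‖x‖ := by
    have hk : -(T x) ∈ K := K.neg_mem ((hKmem (T x)).mpr (hTT x))
    have horthk : ⟪b - m, m - -(T x)⟫ = 0 := by
      have h1 := horth (m - -(T x)) (K.sub_mem hmK hk)
      exact h1
    have hdecomp : b - -(T x) = (b - m) + (m - -(T x)) := by abel
    have hpy2 : ‖b - -(T x)‖ ^ 2 = ‖b - m‖ ^ 2 + ‖m - -(T x)‖ ^ 2 := by
      rw [hdecomp, norm_add_sq_real, horthk]; ring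
    have hx : b - -(T x) = x := by rw [hb]; abel
    rw [hx] at hpy2
    have : ‖b - m‖ ^ 2 ≤ ‖x‖ ^ 2 := by nlinarith [norm_nonneg (m - -(T x))]
    exact le_of_pow_le_pow_left₀ two_ne_zero (norm_nonneg x) this
  calc ‖x - T x‖ = ‖b‖ := by rw [hb]
    _ ≤ ‖T‖ * ‖b - m‖ := step1
    _ ≤ ‖T‖ * ‖x‖ := by
        have : (0:ℝ) ≤ ‖T‖ := norm_nonneg _
        nlinarith

theorem projection_error_bound {Q : Type*} [NormedAddCommGroup Q]
    [InnerProductSpace ℝ Q] [CompleteSpace Q]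
    (T : Q →L[ℝ] Q) (hidem : T.comp T = T)
    (h0 : T ≠ 0) (h1 : T ≠ ContinuousLinearMap.id ℝ Q)
    (u p : Q) (hp : p ∈ Set.range T) :
    ‖u - T u‖ ≤ ‖T‖ * ‖u - p‖ := by
  obtain ⟨y, hy⟩ := hp
  have hTp : T p = p := by
    rw [← hy]
    have := congrArg (fun S : Q →L[ℝ] Q => S y) hidem
    simpa using this
  have hkey : u - T u = (u - p) - T (u - p) := by
    rw [map_sub, hTp]; abel
  rw [hkey]
  exact idem_norm_sub_le T hidem h0 (u - p)
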